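/- Let D ≥ 1 and let U be a D×D real upper triangular matrix (U i j = 0 whenever i > j). Let W denote the vector space of D×D real upper triangular matrices, and define the linear endomorphism S_U of W by S_U(X) = triu(X Uᵀ + U Xᵀ), where triu(A) is the matrix whose (i,j) entry equals A i j when i ≤ j and 0 when i > j. Then the determinant of S_U equals 2^D · ∏_{i=1}^{D} (U i i)^{i}. -/

import Mathlib

open Matrix

/-- The subspace of `D × D` real upper triangular matrices. -/
def upperTriangularSubmodule (D : ℕ) : Submodule ℝ (Matrix (Fin D) (Fin D) ℝ) where
  carrier := {X | ∀ i j : Fin D, j < i → X i j = 0}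
  add_mem' := by
    intro X Y hX hY i j hij
    simp [Matrix.add_apply, hX i j hij, hY i j hij]
  zero_mem' := by intro i j _; rfl
  smul_mem' := by
    intro c X hX i j hij
    simp [Matrix.smul_apply, hX i j hij]

/-- `triu` : keep the upper triangular part of a matrix, as a linear map. -/
def triuLinearMap (D : ℕ) :
    Matrix (Fin D) (Fin D) ℝ →ₗ[ℝ] Matrix (Fin D) (Fin D) ℝ where
  toFun A := Matrix.of fun i j => if i ≤ j then A i j else 0
  map_add' A B := by
    ext i j
    simp only [Matrix.of_apply, Matrix.add_apply]
    split <;> simp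
  map_smul' c A := by
    ext i j
    simp only [Matrix.of_apply, Matrix.smul_apply, RingHom.id_apply]
    split <;> simp

/-- The endomorphism `X ↦ triu (X Uᵀ + U Xᵀ)` of the space of upper triangular
matrices: the Fréchet derivative of the reversed Cholesky parametrization `U ↦ U Uᵀ`. -/
noncomputable def revCholeskyJacobianMap (D : ℕ) (U : Matrix (Fin D) (Fin D) ℝ) :
    upperTriangularSubmodule D →ₗ[ℝ] upperTriangularSubmodule D :=
  LinearMap.codRestrict (upperTriangularSubmodule D)
    ((triuLinearMap D).comp
      ((LinearMap.mulRight ℝ Uᵀ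
          + (LinearMap.mulLeft ℝ U).comp
              (Matrix.transposeLinearEquiv (Fin D) (Fin D) ℝ ℝ).toLinearMap).comp
        (upperTriangularSubmodule D).subtype))
    (by
      intro X i j hij
      simp only [LinearMap.comp_apply, triuLinearMap, LinearMap.coe_mk, AddHom.coe_mk,
        Matrix.of_apply]
      exact if_neg (not_le.mpr hij))

abbrev UTIdx (D : ℕ) := {p : Fin D × Fin D // p.1 ≤ p.2}


noncomputable def utEquivFun (D : ℕ) : upperTriangularSubmodule D ≃ₗ[ℝ] (UTIdx D → ℝ) where
  toFun X p := X.val p.val.1 p.val.2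
  map_add' := by intros; rfl
  map_smul' := by intros; rfl
  invFun f := ⟨Matrix.of fun i j => if h : i ≤ j then f ⟨(i,j), h⟩ else 0, by
    intro i j hij; exact dif_neg (not_le.mpr hij)⟩
  left_inv X := by
    apply Subtype.ext
    ext i j
    by_cases h : i ≤ j
    · simp [h]
    · simp [h, X.2 i j (not_le.mp h)]
  right_inv f := by
    funext p
    simp [p.2]


noncomputable def utBasis (D : ℕ) : Module.Basis (UTIdx D) ℝ (upperTriangularSubmodule D) :=
  Module.Basis.ofEquivFun (utEquivFun D)


lemma utBasis_val (D : ℕ) (p : UTIdx D) (i j : Fin D) :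
    ((utBasis D p : upperTriangularSubmodule D) : Matrix (Fin D) (Fin D) ℝ) i j
      = if (i, j) = p.val then 1 else 0 := by
  rw [utBasis, Module.Basis.coe_ofEquivFun]
  show (if h : i ≤ j then (Pi.single p (1:ℝ) : UTIdx D → ℝ) ⟨(i,j), h⟩ else 0) = _
  by_cases h : i ≤ j
  · rw [dif_pos h]
    by_cases hp : (i, j) = p.val
    · rw [if_pos hp]
      have : (⟨(i,j), h⟩ : UTIdx D) = p := Subtype.ext hp
      rw [this, Pi.single_eq_same]
    · rw [if_neg hp, Pi.single_eq_of_ne (fun hc => hp (congrArg Subtype.val hc)) ]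
  · rw [dif_neg h, if_neg]
    intro hp
    exact h (hp ▸ p.2 : (i, j).1 ≤ (i, j).2)


lemma toMatrix_entry (D : ℕ) (U : Matrix (Fin D) (Fin D) ℝ) (q p : UTIdx D) :
    LinearMap.toMatrix (utBasis D) (utBasis D) (revCholeskyJacobianMap D U) q p
      = (if q.val.1 = p.val.1 then U q.val.2 p.val.2 else 0)
        + (if q.val.2 = p.val.1 then U q.val.1 p.val.2 else 0) := by
  rw [LinearMap.toMatrix_apply]
  rw [utBasis, Module.Basis.ofEquivFun_repr_apply]
  show (((revCholeskyJacobianMap D U) (Module.Basis.ofEquivFun (utEquivFun D) p)).val)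
      q.val.1 q.val.2 = _
  change (if q.val.1 ≤ q.val.2 then
      (((Module.Basis.ofEquivFun (utEquivFun D) p : upperTriangularSubmodule D) :
          Matrix (Fin D) (Fin D) ℝ) * Uᵀ
        + U * (((Module.Basis.ofEquivFun (utEquivFun D) p : upperTriangularSubmodule D) :
          Matrix (Fin D) (Fin D) ℝ))ᵀ) q.val.1 q.val.2 else 0) = _
  simp only [triuLinearMap, LinearMap.coe_mk, AddHom.coe_mk, Matrix.of_apply, if_pos q.2,
    Matrix.add_apply, Matrix.mul_apply, Matrix.transpose_apply]
  have hb := utBasis_val D p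
  simp only [utBasis] at hb
  simp only [Matrix.transposeAddEquiv, AddEquiv.coe_mk, Equiv.coe_fn_mk,
    Matrix.transpose_apply, hb]
  simp [Prod.ext_iff, ite_and, ite_mul, mul_ite, Finset.sum_ite_eq', Finset.sum_ite_eq]

/-- The determinant of `X ↦ triu (X Uᵀ + U Xᵀ)` on upper triangular matrices equals
`2^D ∏_{i=1}^D (U i i)^{i}` (Jacobian of `U ↦ U Uᵀ`, Lemma A.1). -/
theorem det_revCholeskyJacobianMap (D : ℕ) (hD : 1 ≤ D) (U : Matrix (Fin D) (Fin D) ℝ)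
    (hU : ∀ i j : Fin D, j < i → U i j = 0) :
    LinearMap.det (revCholeskyJacobianMap D U)
      = 2 ^ D * ∏ i : Fin D, U i i ^ ((i : ℕ) + 1) := by

  classical
  rw [← LinearMap.det_toMatrix (utBasis D)]
  set M := LinearMap.toMatrix (utBasis D) (utBasis D) (revCholeskyJacobianMap D U) with hM
  have keyinj : Function.Injective (fun p : UTIdx D => toLex ((p.val.2, p.val.1) : Fin D × Fin D)) := by
    intro a b hab
    have h2 : ((a.val.2, a.val.1) : Fin D × Fin D) = (b.val.2, b.val.1) := toLex.injective hab
    rw [Prod.ext_iff] at h2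
    exact Subtype.ext (Prod.ext h2.2 h2.1)
  letI lo : LinearOrder (UTIdx D) := LinearOrder.lift' _ keyinj
  have htri : @Matrix.BlockTriangular (UTIdx D) (UTIdx D) ℝ lo.toLT _ M id := by
    intro q p h
    have h' : toLex ((p.val.2, p.val.1) : Fin D × Fin D)
        < toLex ((q.val.2, q.val.1) : Fin D × Fin D) := h
    rw [Prod.Lex.lt_iff] at h'
    rw [hM, toMatrix_entry]
    rcases h' with h | ⟨h1, h2⟩
    · have e1 : U q.val.2 p.val.2 = 0 := hU _ _ h
      have e2 : ¬ q.val.2 = p.val.1 := fun he =>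
        absurd (lt_of_le_of_lt (he ▸ p.2) h) (lt_irrefl _)
      simp [e1, e2]
    · have e1 : ¬ q.val.1 = p.val.1 := fun he => absurd (he ▸ h2) (lt_irrefl _)
      have e2 : ¬ q.val.2 = p.val.1 := fun he =>
        absurd (lt_of_le_of_lt (le_trans q.2 (le_of_eq he)) h2) (lt_irrefl _)
      simp [e1, e2]
  rw [Matrix.det_of_upperTriangular htri]
  have hdiag : ∀ p : UTIdx D, M p p
      = (if p.val.1 = p.val.2 then 2 else 1) * U p.val.2 p.val.2 := by
    intro p
    rw [hM, toMatrix_entry, if_pos rfl]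
    by_cases h : p.val.1 = p.val.2
    · rw [if_pos h.symm, if_pos h, h]; ring
    · rw [if_neg (fun he => h he.symm), if_neg h, add_zero, one_mul]
  simp only [hdiag]
  rw [← Finset.prod_subtype (Finset.univ.filter fun q : Fin D × Fin D => q.1 ≤ q.2)
    (by simp) (fun q : Fin D × Fin D => (if q.1 = q.2 then 2 else 1) * U q.2 q.2)]
  rw [Finset.prod_filter]
  rw [Fintype.prod_prod_type]
  rw [Finset.prod_comm]
  have hrow : ∀ j : Fin D, (∏ i : Fin D, if i ≤ j then (if i = j then 2 else 1) * U j j else 1)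
      = 2 * U j j ^ ((j : ℕ) + 1) := by
    intro j
    have hsplit : ∀ i : Fin D, (if i ≤ j then (if i = j then 2 else 1) * U j j else 1)
        = (if i = j then (2:ℝ) else 1) * (if i ≤ j then U j j else 1) := by
      intro i
      by_cases h1 : i = j
      · subst h1; simp
      · by_cases h2 : i ≤ j <;> simp [h1, h2]
    simp only [hsplit]
    rw [Finset.prod_mul_distrib, Finset.prod_ite_eq' Finset.univ j (fun _ => (2:ℝ))]
    rw [← Finset.prod_filter, Finset.prod_const]
    rw [if_pos (Finset.mem_univ j)]
    congr 1
    rw [show (Finset.univ.filter fun i : Fin D => i ≤ j) = Finset.Iic j by ext i; simp]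
    rw [Fin.card_Iic]
  simp only [hrow]
  rw [Finset.prod_mul_distrib, Finset.prod_const, Finset.card_univ, Fintype.card_fin]
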